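/- With the notation of the exact-abstraction pseudo-count formula, if the aggregation size G > 1 and 0 < N̂ᴬ < n̂ᴬ, then the ground pseudo-count strictly exceeds the abstract pseudo-count: N̂ > N̂ᴬ. -/

import Mathlib

theorem ground_pseudo_count_exceeds_abstract
    (NA nA : ℝ) (hNA : 0 < NA) (h : NA < nA) (G : ℕ) (hG : 1 < G) :
    NA < (NA / ((G : ℝ) * nA)) * (1 - (NA + 1) / ((G : ℝ) * (nA + 1))) /
      ((NA + 1) / ((G : ℝ) * (nA + 1)) - NA / ((G : ℝ) * nA)) := by
  have hg : (2:ℝ) ≤ G := by exact_mod_cast hG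
  have hg0 : (0:ℝ) < G := by linarith
  have hnA : 0 < nA := hNA.trans h
  have hnA1 : (0:ℝ) < nA + 1 := by linarith
  have hd : 0 < (NA + 1) / ((G : ℝ) * (nA + 1)) - NA / ((G : ℝ) * nA) := by
    rw [div_sub_div _ _ (by positivity) (by positivity)]
    apply div_pos
    · nlinarith
    · positivity
  rw [lt_div_iff₀ hd]
  have h1 : ((G:ℝ) * nA) ≠ 0 := by positivity
  have h2 : ((G:ℝ) * (nA + 1)) ≠ 0 := by positivity
  field_simp
  ring_nf
  nlinarith [mul_pos (mul_pos (mul_pos (mul_pos (mul_pos hNA (by positivity : (0:ℝ) < (G:ℝ)^2)) hnA) (by linarith : (0:ℝ) < (G:ℝ) - 1)) hnA1) (by linarith : (0:ℝ) < NA + 1)]
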